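/- (Example 1, minimum projection distance.) Let c₁, c₂ > 0 and let u₁, u₂ ∈ ℤ with gcd(u₁,u₂) = 1, and set û = (c₁u₁, c₂u₂) ∈ ℝ². Then the minimum of ‖P_{û^⊥}((c₁n₁, c₂n₂))‖ over all (n₁,n₂) ∈ ℤ² that are not integer multiples of (u₁,u₂) equals c₁c₂ / √(u₁²c₁² + u₂²c₂²). -/

import Mathlib

open Real
open scoped RealInnerProductSpace

/-- The vector (a, b) regarded as a point of the Euclidean plane ℝ². -/
noncomputable def vec2 (a b : ℝ) : EuclideanSpace ℝ (Fin 2) :=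
  (WithLp.equiv 2 (Fin 2 → ℝ)).symm ![a, b]

lemma inner_vec2 (A B P Q : ℝ) : ⟪vec2 A B, vec2 P Q⟫ = A * P + B * Q := by
  simp [vec2, PiLp.inner_apply, Fin.sum_univ_two, RCLike.inner_apply]
  ring

lemma norm_vec2 (A B : ℝ) : ‖vec2 A B‖ = Real.sqrt (A ^ 2 + B ^ 2) := by
  simp [vec2, EuclideanSpace.norm_eq, Fin.sum_univ_two, sq_abs]

lemma proj_norm (A B P Q : ℝ) (hS : 0 < P ^ 2 + Q ^ 2) :
    ‖vec2 A B - (⟪vec2 A B, vec2 P Q⟫ / ‖vec2 P Q‖ ^ 2) • vec2 P Q‖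
      = |A * Q - B * P| / Real.sqrt (P ^ 2 + Q ^ 2) := by
  have hPQ : ‖vec2 P Q‖ ^ 2 = P ^ 2 + Q ^ 2 := by
    rw [norm_vec2, Real.sq_sqrt hS.le]
  set t : ℝ := (A * P + B * Q) / (P ^ 2 + Q ^ 2) with ht
  have hdiff : vec2 A B - (⟪vec2 A B, vec2 P Q⟫ / ‖vec2 P Q‖ ^ 2) • vec2 P Q
      = vec2 (A - t * P) (B - t * Q) := by
    rw [inner_vec2, hPQ]
    apply PiLp.ext
    intro i
    fin_cases i <;> simp [vec2, ht]
  rw [hdiff, norm_vec2]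
  have key : (A - t * P) ^ 2 + (B - t * Q) ^ 2
      = (A * Q - B * P) ^ 2 / (P ^ 2 + Q ^ 2) := by
    rw [ht]
    field_simp
    ring
  rw [key, Real.sqrt_div (sq_nonneg _), Real.sqrt_sq_eq_abs]

lemma coprime_prop (u₁ u₂ n₁ n₂ : ℤ) (hu : Int.gcd u₁ u₂ = 1)
    (h : n₁ * u₂ - n₂ * u₁ = 0) : ∃ k : ℤ, n₁ = k * u₁ ∧ n₂ = k * u₂ := by
  obtain ⟨a, b, hab⟩ := Int.isCoprime_iff_gcd_eq_one.mpr hu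
  refine ⟨a * n₁ + b * n₂, ?_, ?_⟩
  · linear_combination -n₁ * hab + b * h
  · linear_combination -n₂ * hab - a * h

/-- Example 1: for gcd(u₁,u₂) = 1 and û = (c₁u₁, c₂u₂), the minimum norm of the
orthogonal projection onto û^⊥ of a lattice point (c₁n₁, c₂n₂) with (n₁,n₂) not an
integer multiple of (u₁,u₂) equals c₁c₂ / √(u₁²c₁² + u₂²c₂²). -/
theorem stmt_14 (c₁ c₂ : ℝ) (hc₁ : 0 < c₁) (hc₂ : 0 < c₂) (u₁ u₂ : ℤ)
    (hu : Int.gcd u₁ u₂ = 1) :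
    IsLeast
      {r : ℝ | ∃ n₁ n₂ : ℤ, (¬∃ k : ℤ, n₁ = k * u₁ ∧ n₂ = k * u₂) ∧
        r = ‖vec2 (c₁ * n₁) (c₂ * n₂) -
          (⟪vec2 (c₁ * n₁) (c₂ * n₂), vec2 (c₁ * u₁) (c₂ * u₂)⟫ /
              ‖vec2 (c₁ * u₁) (c₂ * u₂)‖ ^ 2) • vec2 (c₁ * u₁) (c₂ * u₂)‖}
      (c₁ * c₂ / Real.sqrt ((u₁ : ℝ) ^ 2 * c₁ ^ 2 + (u₂ : ℝ) ^ 2 * c₂ ^ 2)) := by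
  set S : ℝ := (u₁ : ℝ) ^ 2 * c₁ ^ 2 + (u₂ : ℝ) ^ 2 * c₂ ^ 2 with hSdef
  have hne : u₁ ≠ 0 ∨ u₂ ≠ 0 := by
    by_contra hcon
    push_neg at hcon
    obtain ⟨h1, h2⟩ := hcon
    subst h1; subst h2
    simp at hu
  have hS : 0 < S := by
    rcases hne with h | h
    · have h' : (u₁ : ℝ) ≠ 0 := Int.cast_ne_zero.mpr h
      positivity
    · have h' : (u₂ : ℝ) ≠ 0 := Int.cast_ne_zero.mpr h
      positivity
  have hS' : 0 < (c₁ * (u₁ : ℝ)) ^ 2 + (c₂ * (u₂ : ℝ)) ^ 2 := by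
    rw [show (c₁ * (u₁ : ℝ)) ^ 2 + (c₂ * (u₂ : ℝ)) ^ 2 = S by rw [hSdef]; ring]
    exact hS
  have hsqrt : 0 < Real.sqrt S := Real.sqrt_pos.mpr hS
  have habs : ∀ n₁ n₂ : ℤ,
      ‖vec2 (c₁ * n₁) (c₂ * n₂) -
          (⟪vec2 (c₁ * n₁) (c₂ * n₂), vec2 (c₁ * u₁) (c₂ * u₂)⟫ /
              ‖vec2 (c₁ * u₁) (c₂ * u₂)‖ ^ 2) • vec2 (c₁ * u₁) (c₂ * u₂)‖
        = c₁ * c₂ * |((n₁ * u₂ - n₂ * u₁ : ℤ) : ℝ)| / Real.sqrt S := by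
    intro n₁ n₂
    rw [proj_norm _ _ _ _ hS']
    rw [show (c₁ * (u₁ : ℝ)) ^ 2 + (c₂ * (u₂ : ℝ)) ^ 2 = S by rw [hSdef]; ring]
    congr 1
    rw [show c₁ * (n₁ : ℝ) * (c₂ * u₂) - c₂ * n₂ * (c₁ * u₁)
        = (c₁ * c₂) * (((n₁ * u₂ - n₂ * u₁ : ℤ) : ℝ)) by push_cast; ring]
    rw [abs_mul, abs_of_pos (by positivity : (0:ℝ) < c₁ * c₂)]
  constructor
  · obtain ⟨a, b, hab⟩ := Int.isCoprime_iff_gcd_eq_one.mpr hu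
    refine ⟨b, -a, ?_, ?_⟩
    · rintro ⟨k, hk1, hk2⟩
      have : (1 : ℤ) = 0 := by linear_combination -hab + u₂ * hk1 - u₁ * hk2
      exact one_ne_zero this
    · rw [habs]
      have h1 : b * u₂ - -a * u₁ = 1 := by linear_combination hab
      rw [h1]
      norm_num
  · rintro r ⟨n₁, n₂, hnk, rfl⟩
    rw [habs]
    have hd : n₁ * u₂ - n₂ * u₁ ≠ 0 := fun h => hnk (coprime_prop u₁ u₂ n₁ n₂ hu h)
    have h1 : (1 : ℝ) ≤ |((n₁ * u₂ - n₂ * u₁ : ℤ) : ℝ)| := by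
      rw [← Int.cast_abs]
      exact_mod_cast Int.one_le_abs hd
    rw [div_le_div_iff₀ hsqrt hsqrt]
    have : c₁ * c₂ ≤ c₁ * c₂ * |((n₁ * u₂ - n₂ * u₁ : ℤ) : ℝ)| :=
      le_mul_of_one_le_right (by positivity) h1
    nlinarith [hsqrt]
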